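/- Let w : ℝ² → ℝ be differentiable and satisfy the gas dynamics equation w_x = w·w_y at every point of ℝ², and let t ∈ ℝ. Suppose 1 − t·w(x − t·y, y) ≠ 0 for all (x,y) in an open set V ⊆ ℝ². Define ŵ on V by ŵ(x,y) = w(x − t·y, y) / (1 − t·w(x − t·y, y)). Then ŵ satisfies ŵ_x = ŵ·ŵ_y at every point of V. (This is the finite point symmetry of the gas dynamics equation generated by the vector field y∂_x + w²∂_w from the projective symmetry algebra sl(3).) -/
import Mathlib


/-- Partial derivative of `w : ℝ × ℝ → ℝ` in the first coordinate direction. -/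
noncomputable def pdx (w : ℝ × ℝ → ℝ) (p : ℝ × ℝ) : ℝ := fderiv ℝ w p (1, 0)

/-- Partial derivative of `w : ℝ × ℝ → ℝ` in the second coordinate direction. -/
noncomputable def pdy (w : ℝ × ℝ → ℝ) (p : ℝ × ℝ) : ℝ := fderiv ℝ w p (0, 1)

/-- if `w` is differentiable on `ℝ²` and satisfies `w_x = w·w_y`
everywhere, `t ∈ ℝ`, and `1 − t·w(x − t·y, y) ≠ 0` on an open set `V`, then
`ŵ(x,y) = w(x − t·y, y)/(1 − t·w(x − t·y, y))` satisfies `ŵ_x = ŵ·ŵ_y` at every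
point of `V` (the finite point symmetry generated by `y∂_x + w²∂_w` from
`sl(3)`). -/
theorem gas_dynamics_symmetry_projective (w : ℝ × ℝ → ℝ)
    (hw : Differentiable ℝ w)
    (heq : ∀ p : ℝ × ℝ, pdx w p = w p * pdy w p)
    (t : ℝ) (V : Set (ℝ × ℝ)) (hV : IsOpen V)
    (hden : ∀ p ∈ V, 1 - t * w (p.1 - t * p.2, p.2) ≠ 0) :
    ∀ p ∈ V,
      pdx (fun q : ℝ × ℝ =>
          w (q.1 - t * q.2, q.2) / (1 - t * w (q.1 - t * q.2, q.2))) p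
        = (w (p.1 - t * p.2, p.2) / (1 - t * w (p.1 - t * p.2, p.2))) *
          pdy (fun q : ℝ × ℝ =>
          w (q.1 - t * q.2, q.2) / (1 - t * w (q.1 - t * q.2, q.2))) p := by
  intro p hp
  set L : (ℝ × ℝ) →L[ℝ] (ℝ × ℝ) :=
    (ContinuousLinearMap.fst ℝ ℝ ℝ - t • ContinuousLinearMap.snd ℝ ℝ ℝ).prod
      (ContinuousLinearMap.snd ℝ ℝ ℝ) with hL
  have hLapp : ∀ q : ℝ × ℝ, L q = (q.1 - t * q.2, q.2) := by
    intro q; simp [hL]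
  set p' : ℝ × ℝ := (p.1 - t * p.2, p.2) with hp'
  set D : (ℝ × ℝ) →L[ℝ] ℝ := fderiv ℝ w p' with hD
  have hu : HasFDerivAt (fun q : ℝ × ℝ => w (q.1 - t * q.2, q.2)) (D.comp L) p := by
    have h1 : HasFDerivAt w D (L p) := by
      rw [hLapp]; exact (hw p').hasFDerivAt
    have := h1.comp p L.hasFDerivAt
    refine this.congr_of_eventuallyEq ?_
    filter_upwards with q
    simp [Function.comp, hLapp]
  have hdp : (1 - t * w p') ≠ 0 := hden p hp
  have hd : HasFDerivAt (fun q : ℝ × ℝ => 1 - t * w (q.1 - t * q.2, q.2))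
      (-(t • (D.comp L))) p := by
    simpa using ((hu.const_mul t).const_sub 1)
  have hinv : HasFDerivAt (fun q : ℝ × ℝ => (1 - t * w (q.1 - t * q.2, q.2))⁻¹)
      (((1 - t * w p')^2)⁻¹ • (t • (D.comp L))) p := by
    have := (hasFDerivAt_inv (𝕜 := ℝ) hdp).comp p hd
    refine this.congr_fderiv (ContinuousLinearMap.ext fun v => ?_)
    simp [Function.comp]
    ring
  have hf : HasFDerivAt (fun q : ℝ × ℝ =>
      w (q.1 - t * q.2, q.2) / (1 - t * w (q.1 - t * q.2, q.2)))
      ((1 - t * w p')⁻¹ • (D.comp L) +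
        (w p' * ((1 - t * w p')^2)⁻¹) • (t • (D.comp L))) p := by
    have := hu.mul hinv
    simp only [div_eq_mul_inv]
    refine this.congr_fderiv (ContinuousLinearMap.ext fun v => ?_)
    simp
    ring
  have hwx : D (1, 0) = pdx w p' := rfl
  have hwy : D (0, 1) = pdy w p' := rfl
  have hdir : D (-t, 1) = -t * pdx w p' + pdy w p' := by
    have : ((-t : ℝ), (1 : ℝ)) = (-t) • ((1:ℝ), (0:ℝ)) + ((0:ℝ), (1:ℝ)) := by
      simp
    rw [this, map_add, map_smul, hwx, hwy]; simp
  have hx := congrArg (fun F : (ℝ × ℝ) →L[ℝ] ℝ => F (1, 0)) hf.fderiv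
  have hy := congrArg (fun F : (ℝ × ℝ) →L[ℝ] ℝ => F (0, 1)) hf.fderiv
  simp only [ContinuousLinearMap.add_apply, ContinuousLinearMap.smul_apply,
    ContinuousLinearMap.comp_apply, hLapp, smul_eq_mul] at hx hy
  rw [show ((1:ℝ) - t * 0, (0:ℝ)) = ((1:ℝ), (0:ℝ)) by norm_num] at hx
  rw [show ((0:ℝ) - t * 1, (1:ℝ)) = ((-t:ℝ), (1:ℝ)) by norm_num] at hy
  rw [hwx] at hx
  rw [hdir] at hy
  rw [pdx, pdy, hx, hy]
  have hkey : pdx w p' = w p' * pdy w p' := heq p'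
  rw [hkey]
  field_simp
  ring
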